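/- Let G and H be finite multiplicative Lie algebras and α : G → H a multiplicative Lie algebra homomorphism. Then α induces an isoclinism between G and H (i.e. there exists an isoclinism (λ, μ) with λ(g𝒵(G)) = α(g)𝒵(H) for all g ∈ G and μ(x) = α(x) for all x ∈ ^M[G,G]) if and only if ker(α) ∩ ^M[G,G] = {1} and H = Image(α)·𝒵(H). -/

import Mathlib

universe u v

/-- A multiplicative Lie algebra: a group with an extra binary operation `⋆`
satisfying the Ellis axioms. -/
class MultLieAlgebra (G : Type u) extends Group G where
  lstar : G → G → G
  lstar_self : ∀ g : G, lstar g g = 1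
  lstar_mul_right : ∀ g h h' : G, lstar g (h * h') = lstar g h * (h * lstar g h' * h⁻¹)
  lstar_mul_left : ∀ g g' h : G, lstar (g * g') h = (g * lstar g' h * g⁻¹) * lstar g h
  lstar_jacobi : ∀ g h k : G,
      lstar (lstar g h) (h * k * h⁻¹) * lstar (lstar h k) (k * g * k⁻¹) *
        lstar (lstar k g) (g * h * g⁻¹) = 1
  conj_lstar : ∀ k g h : G, k * lstar g h * k⁻¹ = lstar (k * g * k⁻¹) (k * h * k⁻¹)

namespace MultLieAlgebra

open scoped commutatorElement

infixl:72 " ⋆ " => MultLieAlgebra.lstar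

variable {G : Type u} [MultLieAlgebra G]

lemma one_lstar (x : G) : (1 : G) ⋆ x = 1 := by
  have h := lstar_mul_left (1 : G) 1 x
  simp only [one_mul, inv_one, mul_one] at h
  exact (right_eq_mul.mp h)

lemma lstar_one (x : G) : x ⋆ (1 : G) = 1 := by
  have h := lstar_mul_right x (1 : G) 1
  simp only [one_mul, inv_one, mul_one] at h
  exact left_eq_mul.mp h

lemma inv_lstar_of_lstar_eq_one {g : G} (hg : ∀ x : G, g ⋆ x = 1) (y : G) : g⁻¹ ⋆ y = 1 := by
  have h := lstar_mul_left g⁻¹ g y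
  simp only [inv_mul_cancel, one_lstar, hg, mul_one, inv_inv] at h
  simpa using h.symm

lemma lstar_inv_of_lstar_eq_one {g : G} (hg : ∀ x : G, x ⋆ g = 1) (y : G) : y ⋆ g⁻¹ = 1 := by
  have h := lstar_mul_right y g⁻¹ g
  simp only [inv_mul_cancel, lstar_one, hg, mul_one, inv_inv] at h
  simpa using h.symm

/-- The multiplicative commutator ideal `ᴹ[G,G]`, generated by all commutators
`⁅a,b⁆` and all values `a ⋆ b`. -/
def mlCommutator (G : Type u) [MultLieAlgebra G] : Subgroup G :=
  Subgroup.closure {x : G | (∃ a b : G, x = ⁅a, b⁆) ∨ ∃ a b : G, x = a ⋆ b}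

lemma commutator_mem_mlCommutator (a b : G) : ⁅a, b⁆ ∈ mlCommutator G :=
  Subgroup.subset_closure (Or.inl ⟨a, b, rfl⟩)

lemma lstar_mem_mlCommutator (a b : G) : a ⋆ b ∈ mlCommutator G :=
  Subgroup.subset_closure (Or.inr ⟨a, b, rfl⟩)

instance mlCommutator_normal : (mlCommutator G).Normal := by
  constructor
  intro n hn g
  induction hn using Subgroup.closure_induction with
  | mem x hx =>
    rcases hx with ⟨a, b, rfl⟩ | ⟨a, b, rfl⟩
    · have : g * ⁅a, b⁆ * g⁻¹ = ⁅g * a * g⁻¹, g * b * g⁻¹⁆ := by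
        simp only [commutatorElement_def]; group
      rw [this]; exact commutator_mem_mlCommutator _ _
    · rw [conj_lstar]; exact lstar_mem_mlCommutator _ _
  | one => simpa using one_mem (mlCommutator G)
  | mul x y hx hy ihx ihy =>
    have : g * (x * y) * g⁻¹ = (g * x * g⁻¹) * (g * y * g⁻¹) := by group
    rw [this]; exact mul_mem ihx ihy
  | inv x hx ihx =>
    have : g * x⁻¹ * g⁻¹ = (g * x * g⁻¹)⁻¹ := by group
    rw [this]; exact inv_mem ihx

/-- The multiplicative Lie center `𝒵(G) = Z(G) ∩ LZ(G)`. -/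
def mlCenter (G : Type u) [MultLieAlgebra G] : Subgroup G where
  carrier := {g : G | (∀ x : G, g * x = x * g) ∧ ∀ x : G, g ⋆ x = 1 ∧ x ⋆ g = 1}
  one_mem' := ⟨fun x => by simp, fun x => ⟨one_lstar x, lstar_one x⟩⟩
  mul_mem' := by
    rintro a b ⟨ha₁, ha₂⟩ ⟨hb₁, hb₂⟩
    refine ⟨fun x => by rw [mul_assoc, hb₁ x, ← mul_assoc, ha₁ x, mul_assoc], fun x => ?_⟩
    constructor
    · rw [lstar_mul_left, (hb₂ x).1, (ha₂ x).1]; simp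
    · rw [lstar_mul_right, (ha₂ x).2, (hb₂ x).2]; simp
  inv_mem' := by
    rintro a ⟨ha₁, ha₂⟩
    refine ⟨fun x => by rw [inv_mul_eq_iff_eq_mul, ← mul_assoc, ha₁ x, mul_assoc,
      mul_inv_cancel, mul_one], fun x => ?_⟩
    exact ⟨inv_lstar_of_lstar_eq_one (fun y => (ha₂ y).1) x,
      lstar_inv_of_lstar_eq_one (fun y => (ha₂ y).2) x⟩

lemma mem_mlCenter_iff {g : G} :
    g ∈ mlCenter G ↔ (∀ x : G, g * x = x * g) ∧ ∀ x : G, g ⋆ x = 1 ∧ x ⋆ g = 1 :=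
  Iff.rfl

instance mlCenter_normal : (mlCenter G).Normal := by
  constructor
  intro n hn g
  have h : g * n * g⁻¹ = n := by rw [← hn.1 g]; group
  rw [h]; exact hn

/-- An isoclinism between two multiplicative Lie algebras. -/
structure Isoclinism (G : Type u) (H : Type v) [MultLieAlgebra G] [MultLieAlgebra H] where
  lam : (G ⧸ mlCenter G) ≃* (H ⧸ mlCenter H)
  mu : mlCommutator G ≃* mlCommutator H
  map_commutator : ∀ (g g' : G) (h h' : H),
    lam (QuotientGroup.mk g) = QuotientGroup.mk h →
    lam (QuotientGroup.mk g') = QuotientGroup.mk h' →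
    (mu ⟨⁅g, g'⁆, commutator_mem_mlCommutator g g'⟩ : H) = ⁅h, h'⁆
  map_lstar : ∀ (g g' : G) (h h' : H),
    lam (QuotientGroup.mk g) = QuotientGroup.mk h →
    lam (QuotientGroup.mk g') = QuotientGroup.mk h' →
    (mu ⟨g ⋆ g', lstar_mem_mlCommutator g g'⟩ : H) = h ⋆ h'

/-- Two multiplicative Lie algebras are isoclinic if there is an isoclinism between them. -/
def Isoclinic (G : Type u) (H : Type v) [MultLieAlgebra G] [MultLieAlgebra H] : Prop :=
  Nonempty (Isoclinism G H)

/-- Componentwise multiplicative Lie algebra structure on a binary product. -/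
instance instProd (G : Type u) (H : Type v) [MultLieAlgebra G] [MultLieAlgebra H] :
    MultLieAlgebra (G × H) where
  lstar a b := (a.1 ⋆ b.1, a.2 ⋆ b.2)
  lstar_self a := by ext <;> simp [lstar_self]
  lstar_mul_right a b c := by ext <;> simp [lstar_mul_right]
  lstar_mul_left a b c := by ext <;> simp [lstar_mul_left]
  lstar_jacobi a b c := by ext <;> simp [lstar_jacobi]
  conj_lstar k a b := by ext <;> simp [← conj_lstar]

/-- Componentwise multiplicative Lie algebra structure on a Pi type. -/
instance instPi {ι : Type v} (f : ι → Type u) [∀ i, MultLieAlgebra (f i)] :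
    MultLieAlgebra (∀ i, f i) where
  lstar a b := fun i => a i ⋆ b i
  lstar_self a := by funext i; simp [lstar_self]
  lstar_mul_right a b c := by funext i; simp [lstar_mul_right]
  lstar_mul_left a b c := by funext i; simp [lstar_mul_left]
  lstar_jacobi a b c := by funext i; simp [lstar_jacobi]
  conj_lstar k a b := by funext i; simp [← conj_lstar]

/-- The trivial multiplicative Lie algebra structure on the one-element group. -/
instance instPUnit : MultLieAlgebra PUnit.{u+1} where
  lstar _ _ := 1
  lstar_self _ := rfl
  lstar_mul_right _ _ _ := rfl
  lstar_mul_left _ _ _ := rfl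
  lstar_jacobi _ _ _ := rfl
  conj_lstar _ _ _ := rfl

/-- A subalgebra of a multiplicative Lie algebra: a subgroup closed under `⋆`. -/
structure MLSubalgebra (G : Type u) [MultLieAlgebra G] extends Subgroup G where
  lstar_mem' : ∀ {a b : G}, a ∈ carrier → b ∈ carrier → a ⋆ b ∈ carrier

/-- A subalgebra is a multiplicative Lie algebra with the restricted operations. -/
instance instSubalgebra (H : MLSubalgebra G) : MultLieAlgebra H.toSubgroup where
  lstar a b := ⟨(a : G) ⋆ (b : G), H.lstar_mem' a.2 b.2⟩
  lstar_self a := Subtype.ext (lstar_self (a : G))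
  lstar_mul_right a b c := Subtype.ext (lstar_mul_right (a : G) b c)
  lstar_mul_left a b c := Subtype.ext (lstar_mul_left (a : G) b c)
  lstar_jacobi a b c := Subtype.ext (lstar_jacobi (a : G) b c)
  conj_lstar k a b := Subtype.ext (conj_lstar (k : G) a b)

lemma mul_center_lstar {z : G} (hz : z ∈ mlCenter G) (g y : G) : (g * z) ⋆ y = g ⋆ y := by
  rw [lstar_mul_left, (hz.2 y).1]
  simp

lemma lstar_mul_center {z : G} (hz : z ∈ mlCenter G) (g y : G) : y ⋆ (g * z) = y ⋆ g := by
  rw [lstar_mul_right, (hz.2 y).2]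
  simp

/-- The subalgebra `H·𝒵(G)` generated by a subalgebra `H` and the multiplicative
Lie center of `G`. -/
def MLSubalgebra.centerJoin (H : MLSubalgebra G) : MLSubalgebra G where
  carrier := {x : G | ∃ h ∈ H.carrier, ∃ z ∈ mlCenter G, x = h * z}
  one_mem' := ⟨1, H.toSubgroup.one_mem, 1, one_mem _, by simp⟩
  mul_mem' := by
    rintro x y ⟨h, hh, z, hz, rfl⟩ ⟨h', hh', z', hz', rfl⟩
    refine ⟨h * h', H.toSubgroup.mul_mem hh hh', z * z', mul_mem hz hz', ?_⟩
    rw [mul_assoc, ← mul_assoc z h' z', hz.1 h', mul_assoc, ← mul_assoc, ← mul_assoc]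
  inv_mem' := by
    rintro x ⟨h, hh, z, hz, rfl⟩
    refine ⟨h⁻¹, H.toSubgroup.inv_mem hh, z⁻¹, inv_mem hz, ?_⟩
    rw [mul_inv_rev, (inv_mem hz).1 h⁻¹]
  lstar_mem' := by
    rintro x y ⟨h, hh, z, hz, rfl⟩ ⟨h', hh', z', hz', rfl⟩
    exact ⟨h ⋆ h', H.lstar_mem' hh hh', 1, one_mem _, by
      rw [mul_center_lstar hz, lstar_mul_center hz', mul_one]⟩

/-- An ideal of a multiplicative Lie algebra: a normal subgroup `I` with
`g ⋆ i ∈ I` and `i ⋆ g ∈ I` for all `g ∈ G`, `i ∈ I`. -/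
structure MLIdeal (G : Type u) [MultLieAlgebra G] extends Subgroup G where
  conj_mem' : ∀ n : G, n ∈ carrier → ∀ g : G, g * n * g⁻¹ ∈ carrier
  lstar_mem_left' : ∀ (g : G) {i : G}, i ∈ carrier → g ⋆ i ∈ carrier
  lstar_mem_right' : ∀ (g : G) {i : G}, i ∈ carrier → i ⋆ g ∈ carrier

instance MLIdeal.normal (I : MLIdeal G) : I.toSubgroup.Normal := ⟨I.conj_mem'⟩

/-- An ideal is in particular a subalgebra. -/
def MLIdeal.toMLSubalgebra (I : MLIdeal G) : MLSubalgebra G :=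
  { I.toSubgroup with lstar_mem' := fun {a _} _ hb => I.lstar_mem_left' a hb }

lemma MLIdeal.lstar_congr (I : MLIdeal G) {a a' b b' : G}
    (ha : a⁻¹ * a' ∈ I.toSubgroup) (hb : b⁻¹ * b' ∈ I.toSubgroup) :
    (a ⋆ b)⁻¹ * (a' ⋆ b') ∈ I.toSubgroup := by
  obtain ⟨i, hi, rfl⟩ : ∃ i ∈ I.toSubgroup, a' = a * i :=
    ⟨a⁻¹ * a', ha, by group⟩
  obtain ⟨j, hj, rfl⟩ : ∃ j ∈ I.toSubgroup, b' = b * j :=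
    ⟨b⁻¹ * b', hb, by group⟩
  have h1 : (a * i) ⋆ (b * j) = (a * (i ⋆ (b * j)) * a⁻¹) * (a ⋆ (b * j)) :=
    lstar_mul_left a i (b * j)
  have h2 : a ⋆ (b * j) = (a ⋆ b) * (b * (a ⋆ j) * b⁻¹) := lstar_mul_right a b j
  rw [h1, h2]
  have hu : a * (i ⋆ (b * j)) * a⁻¹ ∈ I.toSubgroup :=
    I.conj_mem' _ (I.lstar_mem_right' _ hi) a
  have hv : b * (a ⋆ j) * b⁻¹ ∈ I.toSubgroup :=
    I.conj_mem' _ (I.lstar_mem_left' _ hj) b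
  have : (a ⋆ b)⁻¹ * (a * (i ⋆ (b * j)) * a⁻¹ * ((a ⋆ b) * (b * (a ⋆ j) * b⁻¹))) =
      ((a ⋆ b)⁻¹ * (a * (i ⋆ (b * j)) * a⁻¹) * (a ⋆ b)) * (b * (a ⋆ j) * b⁻¹) := by
    group
  rw [this]
  exact mul_mem (Subgroup.Normal.conj_mem' I.normal _ hu _) hv

/-- The quotient of a multiplicative Lie algebra by an ideal. -/
instance instQuotient (I : MLIdeal G) : MultLieAlgebra (G ⧸ I.toSubgroup) where
  lstar := Quotient.map₂ (· ⋆ ·) (by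
    intro a a' ha b b' hb
    have ha' : a⁻¹ * a' ∈ I.toSubgroup := QuotientGroup.leftRel_apply.mp ha
    have hb' : b⁻¹ * b' ∈ I.toSubgroup := QuotientGroup.leftRel_apply.mp hb
    exact QuotientGroup.leftRel_apply.mpr (I.lstar_congr ha' hb'))
  lstar_self x := Quotient.inductionOn x fun a => congrArg QuotientGroup.mk (lstar_self a)
  lstar_mul_right x y z := Quotient.inductionOn₃ x y z fun a b c =>
    congrArg QuotientGroup.mk (lstar_mul_right a b c)
  lstar_mul_left x y z := Quotient.inductionOn₃ x y z fun a b c =>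
    congrArg QuotientGroup.mk (lstar_mul_left a b c)
  lstar_jacobi x y z := Quotient.inductionOn₃ x y z fun a b c =>
    congrArg QuotientGroup.mk (lstar_jacobi a b c)
  conj_lstar x y z := Quotient.inductionOn₃ x y z fun a b c =>
    congrArg QuotientGroup.mk (conj_lstar a b c)

lemma quot_lstar (I : MLIdeal G) (a b : G) :
    (QuotientGroup.mk (a ⋆ b) : G ⧸ I.toSubgroup) = QuotientGroup.mk a ⋆ QuotientGroup.mk b :=
  rfl

/-- The ideal `I ∩ ᴹ[G,G]`. -/
def MLIdeal.infCommutator (I : MLIdeal G) : MLIdeal G where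
  carrier := {x : G | x ∈ I.toSubgroup ∧ x ∈ mlCommutator G}
  one_mem' := ⟨one_mem _, one_mem _⟩
  mul_mem' := fun ha hb => ⟨mul_mem ha.1 hb.1, mul_mem ha.2 hb.2⟩
  inv_mem' := fun ha => ⟨inv_mem ha.1, inv_mem ha.2⟩
  conj_mem' := fun n hn g =>
    ⟨I.conj_mem' n hn.1 g, Subgroup.Normal.conj_mem mlCommutator_normal n hn.2 g⟩
  lstar_mem_left' := by
    intro g i hi
    exact ⟨I.lstar_mem_left' g hi.1, lstar_mem_mlCommutator _ _⟩
  lstar_mem_right' := by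
    intro g i hi
    exact ⟨I.lstar_mem_right' g hi.1, lstar_mem_mlCommutator _ _⟩

/-- A multiplicative Lie algebra isomorphism is a group isomorphism preserving `⋆`. -/
def IsMLAEquiv {G : Type u} {H : Type v} [MultLieAlgebra G] [MultLieAlgebra H]
    (e : G ≃* H) : Prop :=
  ∀ a b : G, e (a ⋆ b) = e a ⋆ e b

/-- A witness that `G` and `H` arise as quotients of a common multiplicative Lie
algebra `K` by ideals `ZG`, `ZH`, with `G ∼ K ∼ H` (Theorem on common ancestors). -/
structure CommonQuotientWitness (G : Type u) (H : Type u)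
    [MultLieAlgebra G] [MultLieAlgebra H] where
  K : Type u
  [instK : MultLieAlgebra K]
  ZG : MLIdeal K
  ZH : MLIdeal K
  isoG : G ≃* (K ⧸ ZH.toSubgroup)
  isoG_lstar : IsMLAEquiv isoG
  isoH : H ≃* (K ⧸ ZG.toSubgroup)
  isoH_lstar : IsMLAEquiv isoH
  isoclinicGK : Isoclinic G K
  isoclinicKH : Isoclinic K H

/-- A witness that `G` and `H` embed as ideals of a common multiplicative Lie algebra
`K̃`, each isoclinic to `K̃` (common isoclinic descendant). -/
structure CommonIdealWitness (G : Type u) (H : Type u)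
    [MultLieAlgebra G] [MultLieAlgebra H] where
  K : Type u
  [instK : MultLieAlgebra K]
  KG : MLIdeal K
  KH : MLIdeal K
  isoG : G ≃* KG.toMLSubalgebra.toSubgroup
  isoG_lstar : IsMLAEquiv isoG
  isoH : H ≃* KH.toMLSubalgebra.toSubgroup
  isoH_lstar : IsMLAEquiv isoH
  isoclinicG : Isoclinic (KG.toMLSubalgebra.toSubgroup) K
  isoclinicH : Isoclinic (KH.toMLSubalgebra.toSubgroup) K

/-- A witness of a stem multiplicative Lie algebra isoclinic to `G`. -/
structure StemWitness (G : Type u) [MultLieAlgebra G] where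
  H : Type u
  [instH : MultLieAlgebra H]
  stem : mlCenter H ≤ mlCommutator H
  isoclinic : Isoclinic G H


lemma mul_center_commutator_left {z : G} (hz : z ∈ mlCenter G) (a b : G) :
    ⁅a * z, b⁆ = ⁅a, b⁆ := by
  have h : z * b = b * z := hz.1 b
  simp only [commutatorElement_def, mul_inv_rev]
  calc a * z * b * (z⁻¹ * a⁻¹) * b⁻¹ = a * (z * b * z⁻¹) * a⁻¹ * b⁻¹ := by group
    _ = a * b * a⁻¹ * b⁻¹ := by rw [h]; group

lemma mul_center_commutator_right {z : G} (hz : z ∈ mlCenter G) (a b : G) :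
    ⁅a, b * z⁆ = ⁅a, b⁆ := by
  have h : z * a⁻¹ = a⁻¹ * z := hz.1 a⁻¹
  simp only [commutatorElement_def, mul_inv_rev]
  calc a * (b * z) * a⁻¹ * (z⁻¹ * b⁻¹) = a * b * (z * a⁻¹ * z⁻¹) * b⁻¹ := by group
    _ = a * b * a⁻¹ * b⁻¹ := by rw [h]; group

/-- For finite multiplicative Lie algebras and a homomorphism
`α : G → H`, `α` induces an isoclinism between `G` and `H` iff
`ker α ∩ ᴹ[G,G] = 1` and `H = (Im α)·𝒵(H)`. -/
theorem hom_induces_isoclinism_iff {G : Type u} {H : Type v}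
    [MultLieAlgebra G] [MultLieAlgebra H] [Finite G] [Finite H]
    (α : G →* H) (hα : ∀ a b : G, α (a ⋆ b) = α a ⋆ α b) :
    (∃ ic : Isoclinism G H,
        (∀ g : G, ic.lam (QuotientGroup.mk g) = QuotientGroup.mk (α g)) ∧
          ∀ x : mlCommutator G, (ic.mu x : H) = α x) ↔
      α.ker ⊓ mlCommutator G = ⊥ ∧ α.range ⊔ mlCenter H = ⊤ := by
  constructor
  · rintro ⟨ic, hlam, hmu⟩
    constructor
    · rw [Subgroup.eq_bot_iff_forall]
      rintro x hx
      obtain ⟨hxk, hxc⟩ := Subgroup.mem_inf.mp hx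
      have h1 : (ic.mu ⟨x, hxc⟩ : H) = 1 := by
        rw [hmu ⟨x, hxc⟩]; exact hxk
      have h2 : ic.mu ⟨x, hxc⟩ = 1 := Subtype.ext h1
      have h3 : (⟨x, hxc⟩ : mlCommutator G) = 1 := ic.mu.injective (by simp [h2])
      exact congrArg Subtype.val h3
    · rw [Subgroup.eq_top_iff']
      intro h
      obtain ⟨q, hq⟩ := ic.lam.surjective (QuotientGroup.mk h)
      obtain ⟨g, rfl⟩ := QuotientGroup.mk_surjective q
      rw [hlam g] at hq
      have hz : (α g)⁻¹ * h ∈ mlCenter H := QuotientGroup.eq.mp hq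
      have : h = α g * ((α g)⁻¹ * h) := by group
      rw [this]
      exact mul_mem (Subgroup.mem_sup_left ⟨g, rfl⟩) (Subgroup.mem_sup_right hz)
  · rintro ⟨hker, hsup⟩
    -- decomposition of elements of H
    have hdecomp : ∀ h : H, ∃ g : G, ∃ z ∈ mlCenter H, h = α g * z := by
      intro h
      have hmem : h ∈ (↑(α.range ⊔ mlCenter H) : Set H) := by rw [hsup]; trivial
      rw [Subgroup.mul_normal] at hmem
      obtain ⟨a, ha, z, hz, rfl⟩ := hmem
      obtain ⟨g, rfl⟩ := ha
      exact ⟨g, z, hz, rfl⟩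
    -- the kernel condition, elementwise
    have hker' : ∀ x : G, α x = 1 → x ∈ mlCommutator G → x = 1 := by
      intro x h1 h2
      have : x ∈ α.ker ⊓ mlCommutator G := Subgroup.mem_inf.mpr ⟨h1, h2⟩
      rw [hker] at this
      exact this
    -- α maps the center into the center
    have hacen : ∀ z ∈ mlCenter G, α z ∈ mlCenter H := by
      intro z hz
      refine mem_mlCenter_iff.mpr ⟨?_, ?_⟩
      · intro x
        obtain ⟨g, w, hw, rfl⟩ := hdecomp x
        calc α z * (α g * w) = α z * α g * w := by group
          _ = α (z * g) * w := by rw [map_mul]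
          _ = α (g * z) * w := by rw [hz.1 g]
          _ = α g * (α z * w) := by rw [map_mul]; group
          _ = α g * (w * α z) := by rw [hw.1 (α z)]
          _ = α g * w * α z := by group
      · intro x
        obtain ⟨g, w, hw, rfl⟩ := hdecomp x
        constructor
        · rw [lstar_mul_center hw, ← hα, (hz.2 g).1, map_one]
        · rw [mul_center_lstar hw, ← hα, (hz.2 g).2, map_one]
    -- converse: if α g is central then g is central
    have hcen_rev : ∀ g : G, α g ∈ mlCenter H → g ∈ mlCenter G := by
      intro g hg
      refine mem_mlCenter_iff.mpr ⟨?_, ?_⟩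
      · intro x
        have h1 : α ⁅g, x⁆ = 1 := by
          rw [map_commutatorElement, commutatorElement_eq_one_iff_mul_comm]
          exact hg.1 (α x)
        have h2 : ⁅g, x⁆ = 1 := hker' _ h1 (commutator_mem_mlCommutator g x)
        exact commutatorElement_eq_one_iff_mul_comm.mp h2
      · intro x
        constructor
        · exact hker' _ (by rw [hα]; exact (hg.2 (α x)).1) (lstar_mem_mlCommutator g x)
        · exact hker' _ (by rw [hα]; exact (hg.2 (α x)).2) (lstar_mem_mlCommutator x g)
    -- α maps the multiplicative commutator into the multiplicative commutator
    have hmapsto : ∀ x ∈ mlCommutator G, α x ∈ mlCommutator H := by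
      intro x hx
      induction hx using Subgroup.closure_induction with
      | mem y hy =>
        rcases hy with ⟨a, b, rfl⟩ | ⟨a, b, rfl⟩
        · rw [map_commutatorElement]; exact commutator_mem_mlCommutator _ _
        · rw [hα]; exact lstar_mem_mlCommutator _ _
      | one => rw [map_one]; exact one_mem _
      | mul y z _ _ ihy ihz => rw [map_mul]; exact mul_mem ihy ihz
      | inv y _ ihy => rw [map_inv]; exact inv_mem ihy
    -- the restricted map μ₀
    set μ0 : mlCommutator G →* mlCommutator H :=
      MonoidHom.codRestrict (α.comp (mlCommutator G).subtype) (mlCommutator H)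
        (fun x => hmapsto x x.2) with hμ0
    have hμ0apply : ∀ x : mlCommutator G, (μ0 x : H) = α x := fun x => rfl
    have hμ0inj : Function.Injective μ0 := by
      intro x y hxy
      have h1 : α ((x : G) * (y : G)⁻¹) = 1 := by
        have : α (x : G) = α (y : G) := congrArg Subtype.val hxy
        rw [map_mul, map_inv, this]; group
      have h2 : ((x : G) * (y : G)⁻¹) = 1 :=
        hker' _ h1 (mul_mem x.2 (inv_mem y.2))
      exact Subtype.ext (by rwa [mul_inv_eq_one] at h2)
    have hμ0surj : Function.Surjective μ0 := by
      have key : ∀ y ∈ mlCommutator H, ∃ x ∈ mlCommutator G, α x = y := by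
        intro y hy
        induction hy using Subgroup.closure_induction with
        | mem w hw =>
          rcases hw with ⟨a, b, rfl⟩ | ⟨a, b, rfl⟩
          · obtain ⟨g, z, hz, rfl⟩ := hdecomp a
            obtain ⟨g', z', hz', rfl⟩ := hdecomp b
            refine ⟨⁅g, g'⁆, commutator_mem_mlCommutator g g', ?_⟩
            rw [map_commutatorElement, mul_center_commutator_left hz,
              mul_center_commutator_right hz']
          · obtain ⟨g, z, hz, rfl⟩ := hdecomp a
            obtain ⟨g', z', hz', rfl⟩ := hdecomp b
            refine ⟨g ⋆ g', lstar_mem_mlCommutator g g', ?_⟩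
            rw [hα, mul_center_lstar hz, lstar_mul_center hz']
        | one => exact ⟨1, one_mem _, map_one α⟩
        | mul y z _ _ ihy ihz =>
          obtain ⟨x1, hx1, rfl⟩ := ihy
          obtain ⟨x2, hx2, rfl⟩ := ihz
          exact ⟨x1 * x2, mul_mem hx1 hx2, map_mul α x1 x2⟩
        | inv y _ ihy =>
          obtain ⟨x1, hx1, rfl⟩ := ihy
          exact ⟨x1⁻¹, inv_mem hx1, map_inv α x1⟩
      rintro ⟨y, hy⟩
      obtain ⟨x, hx, hxy⟩ := key y hy
      exact ⟨⟨x, hx⟩, Subtype.ext hxy⟩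
    -- the induced map λ₁ on quotients
    set lam0 : G →* H ⧸ mlCenter H := (QuotientGroup.mk' (mlCenter H)).comp α with hlam0
    have hle : mlCenter G ≤ lam0.ker := by
      intro z hz
      exact (QuotientGroup.eq_one_iff _).mpr (hacen z hz)
    set lam1 : G ⧸ mlCenter G →* H ⧸ mlCenter H :=
      QuotientGroup.lift (mlCenter G) lam0 hle with hlam1
    have hlam1apply : ∀ g : G, lam1 (QuotientGroup.mk g) = QuotientGroup.mk (α g) :=
      fun g => rfl
    have hlam1inj : Function.Injective lam1 := by
      intro a b
      induction a using QuotientGroup.induction_on with | H g =>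
      induction b using QuotientGroup.induction_on with | H g' =>
      intro hab
      rw [hlam1apply, hlam1apply] at hab
      have h1 : (α g)⁻¹ * α g' ∈ mlCenter H := QuotientGroup.eq.mp hab
      have h2 : α (g⁻¹ * g') ∈ mlCenter H := by rw [map_mul, map_inv]; exact h1
      exact QuotientGroup.eq.mpr (hcen_rev _ h2)
    have hlam1surj : Function.Surjective lam1 := by
      intro b
      induction b using QuotientGroup.induction_on with | H h =>
      obtain ⟨g, z, hz, rfl⟩ := hdecomp h
      refine ⟨QuotientGroup.mk g, ?_⟩
      rw [hlam1apply]
      exact QuotientGroup.eq.mpr (by simpa using hz)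
    -- assemble the isoclinism
    refine ⟨⟨MulEquiv.ofBijective lam1 (show Function.Bijective lam1 from ⟨hlam1inj, hlam1surj⟩),
        MulEquiv.ofBijective μ0 (show Function.Bijective μ0 from ⟨hμ0inj, hμ0surj⟩), ?_, ?_⟩, ?_, ?_⟩
    · intro g g' h h' h1 h2
      rw [MulEquiv.ofBijective_apply, hlam1apply] at h1 h2
      obtain ⟨z, hz, rfl⟩ : ∃ z ∈ mlCenter H, h = α g * z :=
        ⟨(α g)⁻¹ * h, QuotientGroup.eq.mp h1, by group⟩
      obtain ⟨z', hz', rfl⟩ : ∃ z' ∈ mlCenter H, h' = α g' * z' :=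
        ⟨(α g')⁻¹ * h', QuotientGroup.eq.mp h2, by group⟩
      rw [MulEquiv.ofBijective_apply, hμ0apply, map_commutatorElement,
        mul_center_commutator_left hz, mul_center_commutator_right hz']
    · intro g g' h h' h1 h2
      rw [MulEquiv.ofBijective_apply, hlam1apply] at h1 h2
      obtain ⟨z, hz, rfl⟩ : ∃ z ∈ mlCenter H, h = α g * z :=
        ⟨(α g)⁻¹ * h, QuotientGroup.eq.mp h1, by group⟩
      obtain ⟨z', hz', rfl⟩ : ∃ z' ∈ mlCenter H, h' = α g' * z' :=
        ⟨(α g')⁻¹ * h', QuotientGroup.eq.mp h2, by group⟩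
      rw [MulEquiv.ofBijective_apply, hμ0apply, hα,
        mul_center_lstar hz, lstar_mul_center hz']
    · intro g
      rw [MulEquiv.ofBijective_apply, hlam1apply]
    · intro x
      rw [MulEquiv.ofBijective_apply, hμ0apply]

end MultLieAlgebra
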